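/- Let f : Γ → ℝ be symmetric and C¹ on a symmetric open set Γ ⊂ ℝⁿ, and define F on symmetric matrices with eigenvalue vector in Γ by F(B) = f(eigenvalues of B). If B is diagonal with distinct diagonal entries λ₁,…,λₙ, then the derivative matrix F^{ij} = ∂F/∂B_{ij} is diagonal with F^{ii} = fᵢ(λ). -/

import Mathlib

open Matrix

theorem E_transpose {n:ℕ} (i j : Fin n) (c : ℝ) : (Matrix.single i j c)ᵀ = Matrix.single j i c := by
  ext a b; simp [Matrix.single, Matrix.transpose_apply, and_comm]

theorem diag_mul_E {n:ℕ} (d : Fin n → ℝ) (i j : Fin n) :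
    Matrix.diagonal d * Matrix.single i j (1:ℝ) = d i • Matrix.single i j 1 := by
  ext a b
  rw [Matrix.mul_apply]
  simp only [Matrix.single, Matrix.diagonal_apply, of_apply, ite_and, mul_ite, mul_zero,
    ite_mul, zero_mul, Matrix.smul_apply, smul_ite, smul_zero, smul_eq_mul, mul_one]
  by_cases h1 : i = a <;> by_cases h2 : j = b <;> simp_all [Finset.sum_ite_eq, eq_comm]

theorem E_mul_diag {n:ℕ} (d : Fin n → ℝ) (i j : Fin n) :
    Matrix.single i j (1:ℝ) * Matrix.diagonal d = d j • Matrix.single i j 1 := by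
  ext a b
  rw [Matrix.mul_apply]
  simp only [Matrix.single, Matrix.diagonal_apply, of_apply, ite_and, mul_ite, mul_zero,
    ite_mul, zero_mul, Matrix.smul_apply, smul_ite, smul_zero, smul_eq_mul, mul_one]
  by_cases h1 : i = a <;> by_cases h2 : j = b <;> simp_all [Finset.sum_ite_eq, eq_comm]

theorem diag_single {n:ℕ} (i : Fin n) (c : ℝ) :
    Matrix.diagonal (Pi.single i c) = Matrix.single i i c := by
  ext a b
  simp only [Matrix.diagonal_apply, Matrix.single, of_apply, Pi.single_apply]
  by_cases h1 : i = a <;> by_cases h2 : a = b <;> simp_all [eq_comm]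

theorem diag_update2 {n:ℕ} (lam : Fin n → ℝ) {i j : Fin n} (hij : i ≠ j) (p q : ℝ) :
    Matrix.diagonal (Function.update (Function.update lam i p) j q)
      = Matrix.diagonal lam + (p - lam i) • Matrix.single i i 1
        + (q - lam j) • Matrix.single j j 1 := by
  ext a b
  simp only [Matrix.diagonal_apply, Matrix.add_apply, Matrix.smul_apply, Matrix.single,
    of_apply, Function.update_apply, smul_eq_mul]
  by_cases h1 : a = b
  · subst h1
    by_cases h2 : a = i <;> by_cases h3 : a = j <;> simp_all [eq_comm]
  · have h2 : ¬(i = a ∧ i = b) := by rintro ⟨rfl, rfl⟩; exact h1 rfl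
    have h3 : ¬(j = a ∧ j = b) := by rintro ⟨rfl, rfl⟩; exact h1 rfl
    simp [h1, h2, h3]
open Matrix

noncomputable def rotM {n : ℕ} (i j : Fin n) (C S : ℝ) : Matrix (Fin n) (Fin n) ℝ :=
  1 + (C-1) • Matrix.single i i 1 + (C-1) • Matrix.single j j 1
    + S • Matrix.single i j 1 - S • Matrix.single j i 1

theorem rotM_transpose {n : ℕ} (i j : Fin n) (C S : ℝ) :
    (rotM i j C S)ᵀ = rotM j i C S := by
  unfold rotM
  simp [transpose_add, transpose_sub, transpose_smul, E_transpose]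
  abel

theorem rot_orth {n : ℕ} {i j : Fin n} (hij : i ≠ j) {C S : ℝ} (h1 : C^2 + S^2 = 1) :
    (rotM i j C S)ᵀ * rotM i j C S = 1 := by
  rw [rotM_transpose]
  unfold rotM
  simp only [mul_add, add_mul, mul_sub, sub_mul, Matrix.smul_mul, Matrix.mul_smul, one_mul,
    mul_one, Matrix.single_mul_single_same, Matrix.single_mul_single_of_ne, ne_eq, hij, hij.symm,
    not_false_iff, smul_zero, smul_smul, smul_add, smul_sub, zero_mul, mul_zero, add_zero,
    zero_add, zero_smul, Matrix.zero_mul, Matrix.mul_zero, Matrix.one_mul, Matrix.mul_one]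
  match_scalars <;> linarith [h1]

theorem rot_conj {n : ℕ} {i j : Fin n} (hij : i ≠ j) (lam : Fin n → ℝ) {C S t : ℝ}
    (h1 : C^2 + S^2 = 1) (h2 : C*S*(lam i - lam j) + t*(C^2 - S^2) = 0) :
    (rotM i j C S)ᵀ * (Matrix.diagonal lam
        + t • (Matrix.single i j 1 + Matrix.single j i 1)) * rotM i j C S
      = Matrix.diagonal (Function.update (Function.update lam i
          (C^2 * lam i + S^2 * lam j - 2*C*S*t)) j
          (S^2 * lam i + C^2 * lam j + 2*C*S*t)) := by
  rw [rotM_transpose, diag_update2 lam hij]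
  unfold rotM
  simp only [mul_add, add_mul, mul_sub, sub_mul, Matrix.smul_mul, Matrix.mul_smul, one_mul,
    mul_one, Matrix.single_mul_single_same, Matrix.single_mul_single_of_ne, ne_eq, hij, hij.symm,
    not_false_iff, smul_zero, smul_smul, smul_add, smul_sub, zero_mul, mul_zero, add_zero,
    zero_add, zero_smul, Matrix.zero_mul, Matrix.mul_zero, Matrix.one_mul, Matrix.mul_one,
    diag_mul_E, E_mul_diag]
  have h1i : lam i * C^2 + lam i * S^2 = lam i := by linear_combination (lam i) * h1
  have h2i : C*S*lam i - C*S*lam j + t*C^2 - t*S^2 = 0 := by linear_combination h2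
  match_scalars <;> linarith [h1]
noncomputable def rfun (D : ℝ) : ℝ → ℝ := fun t => Real.sqrt (D^2 + 4*t^2)
noncomputable def cfun (D : ℝ) : ℝ → ℝ := fun t => Real.sqrt ((1 + D / rfun D t)/2)
noncomputable def sfun (D e : ℝ) : ℝ → ℝ := fun t => -(2*e*t) / (rfun D t * (2 * cfun D t))

variable {D e t : ℝ}

theorem rfun_pos (hD : 0 < D) : 0 < rfun D t := by
  unfold rfun; apply Real.sqrt_pos.mpr; positivity

theorem rfun_sq (hD : 0 < D) : (rfun D t)^2 = D^2 + 4*t^2 := by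
  unfold rfun; rw [Real.sq_sqrt]; positivity

theorem cfun_sq (hD : 0 < D) : (cfun D t)^2 = (1 + D / rfun D t)/2 := by
  unfold cfun; rw [Real.sq_sqrt]
  have := rfun_pos (t := t) hD; positivity

theorem cfun_pos (hD : 0 < D) : 0 < cfun D t := by
  unfold cfun; apply Real.sqrt_pos.mpr
  have := rfun_pos (t := t) hD; positivity

theorem trig2 (hD : 0 < D) : cfun D t * sfun D e t = -(e*t) / rfun D t := by
  have hc := cfun_pos (t := t) hD
  have hr := rfun_pos (t := t) hD
  unfold sfun
  field_simp

theorem trig1 (hD : 0 < D) (he : e^2 = 1) : (cfun D t)^2 + (sfun D e t)^2 = 1 := by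
  have hc := cfun_pos (t := t) hD
  have hr := rfun_pos (t := t) hD
  have hc2 := cfun_sq (t := t) hD
  have hr2 := rfun_sq (t := t) hD
  have hs : sfun D e t = -(2*e*t) / (rfun D t * (2 * cfun D t)) := rfl
  have hcr : 2 * (cfun D t)^2 * rfun D t = rfun D t + D := by
    rw [hc2]; field_simp
  have hs2 : (sfun D e t)^2 = 1 - (cfun D t)^2 := by
    rw [hs, div_pow, div_eq_iff (by positivity)]
    linear_combination (4*t^2)*he + (2*(cfun D t)^2*rfun D t - rfun D t + D)*hcr - hr2
  rw [hs2]; ring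

theorem trig3 (hD : 0 < D) (he : e^2 = 1) :
    (cfun D t)^2 - (sfun D e t)^2 = D / rfun D t := by
  have h1 := trig1 (t := t) (e := e) hD he
  have hc2 := cfun_sq (t := t) hD
  have hr := rfun_pos (t := t) hD
  have : (sfun D e t)^2 = 1 - (cfun D t)^2 := by linarith
  rw [this, hc2]
  field_simp
  ring
variable {D e : ℝ}

theorem rfun_zero (hD : 0 < D) : rfun D 0 = D := by
  unfold rfun
  norm_num
  exact Real.sqrt_sq hD.le

theorem cfun_zero (hD : 0 < D) : cfun D 0 = 1 := by
  unfold cfun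
  rw [rfun_zero hD, div_self hD.ne']
  norm_num

theorem sfun_zero (hD : 0 < D) : sfun D e 0 = 0 := by
  unfold sfun; norm_num

theorem rfun_deriv (hD : 0 < D) : HasDerivAt (rfun D) 0 0 := by
  have hinner : HasDerivAt (fun t : ℝ => D^2 + 4*t^2) 0 0 := by
    have h := (((hasDerivAt_id (0:ℝ)).pow 2).const_mul 4).const_add (D^2)
    simpa using h
  have h := hinner.sqrt (by positivity)
  simp only [zero_div] at h; exact h

theorem cfun_deriv (hD : 0 < D) : HasDerivAt (cfun D) 0 0 := by
  have h1 : HasDerivAt (fun t => D / rfun D t) 0 0 := by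
    have h := (hasDerivAt_const (0:ℝ) D).div (rfun_deriv hD) (by rw [rfun_zero hD]; exact hD.ne')
    simp at h; exact h
  have h2 : HasDerivAt (fun t => (1 + D / rfun D t)/2) 0 0 := by
    have h := (h1.const_add 1).div_const 2
    simpa using h
  have h := h2.sqrt (by rw [rfun_zero hD, div_self hD.ne']; norm_num)
  simp only [zero_div] at h; exact h

theorem sfun_deriv (hD : 0 < D) : ∃ w, HasDerivAt (sfun D e) w 0 := by
  have hnum : HasDerivAt (fun t : ℝ => -(2*e*t)) (-(2*e)) 0 := by
    have h := ((hasDerivAt_id (0:ℝ)).const_mul (2*e)).neg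
    simp at h; exact h
  have hden : HasDerivAt (fun t => rfun D t * (2 * cfun D t)) 0 0 := by
    have h := (rfun_deriv hD).mul ((cfun_deriv hD).const_mul 2)
    simp at h; exact h
  have hden0 : rfun D 0 * (2 * cfun D 0) ≠ 0 := by
    rw [rfun_zero hD, cfun_zero hD]; positivity
  exact ⟨_, hnum.div hden hden0⟩
open Matrix in
theorem offdiag_aux {n : ℕ} (i j : Fin n) (hij : i ≠ j) (lam : Fin n → ℝ)
    (hab : lam i ≠ lam j) :
    ∃ μ : ℝ → (Fin n → ℝ), μ 0 = lam ∧ HasDerivAt μ (0 : Fin n → ℝ) 0 ∧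
      ∀ t : ℝ, ∃ Q : Matrix (Fin n) (Fin n) ℝ, Qᵀ * Q = 1 ∧
        Qᵀ * (Matrix.diagonal lam + t • (Matrix.single i j 1 + Matrix.single j i 1)) * Q
          = Matrix.diagonal (μ t) := by
  set a := lam i with ha
  set b := lam j with hb
  set e : ℝ := if b < a then 1 else -1 with hedef
  set D : ℝ := e * (a - b) with hDdef
  have he : e^2 = 1 := by
    rw [hedef]; split_ifs <;> norm_num
  have hD : 0 < D := by
    rw [hDdef, hedef]
    rcases lt_or_gt_of_ne hab with h | h
    · rw [if_neg (by linarith)]; nlinarith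
    · rw [if_pos h]; nlinarith
  have hab' : a - b = e * D := by
    rw [hDdef, ← mul_assoc, ← sq, he, one_mul]
  -- eigenvalue curves
  set μi : ℝ → ℝ := fun t => (cfun D t)^2 * lam i + (sfun D e t)^2 * lam j
      - 2*(cfun D t)*(sfun D e t)*t with hμidef
  set μj : ℝ → ℝ := fun t => (sfun D e t)^2 * lam i + (cfun D t)^2 * lam j
      + 2*(cfun D t)*(sfun D e t)*t with hμjdef
  refine ⟨fun t => Function.update (Function.update lam i (μi t)) j (μj t), ?_, ?_, ?_⟩
  · have h1 : μi 0 = lam i := by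
      rw [hμidef]; simp [cfun_zero hD, sfun_zero hD]
    have h2 : μj 0 = lam j := by
      rw [hμjdef]; simp [cfun_zero hD, sfun_zero hD]
    show Function.update (Function.update lam i (μi 0)) j (μj 0) = lam
    rw [h1, h2]
    funext k
    rcases eq_or_ne k j with rfl | hkj
    · simp
    · rw [Function.update_of_ne hkj]
      rcases eq_or_ne k i with rfl | hki
      · simp
      · rw [Function.update_of_ne hki]
  · -- derivative
    obtain ⟨w, hs'⟩ := sfun_deriv (e := e) hD
    have hc' := cfun_deriv hD
    have hc0 := cfun_zero hD
    have hs0 := sfun_zero (e := e) hD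
    have hμi' : HasDerivAt μi 0 0 := by
      have h := (((hc'.pow 2).mul_const (lam i)).add ((hs'.pow 2).mul_const (lam j))).sub
        ((((hc'.const_mul 2).mul hs').mul (hasDerivAt_id 0)))
      rw [hμidef]
      simp [hc0, hs0] at h; exact h
    have hμj' : HasDerivAt μj 0 0 := by
      have h := (((hs'.pow 2).mul_const (lam i)).add ((hc'.pow 2).mul_const (lam j))).add
        ((((hc'.const_mul 2).mul hs').mul (hasDerivAt_id 0)))
      rw [hμjdef]
      simp [hc0, hs0] at h; exact h
    rw [hasDerivAt_pi]
    intro k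
    rcases eq_or_ne k j with rfl | hkj
    · simpa using hμj'
    · rcases eq_or_ne k i with rfl | hki
      · simp only [Function.update_of_ne hkj, Function.update_self, Pi.zero_apply]
        exact hμi'
      · simp only [Function.update_of_ne hkj, Function.update_of_ne hki, Pi.zero_apply]
        exact hasDerivAt_const 0 (lam k)
  · intro t
    refine ⟨rotM i j (cfun D t) (sfun D e t), rot_orth hij (trig1 hD he), ?_⟩
    have hcond : (cfun D t) * (sfun D e t) * (lam i - lam j)
        + t * ((cfun D t)^2 - (sfun D e t)^2) = 0 := by
      rw [trig2 hD, trig3 hD he, ← ha, ← hb, hab']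
      have hr := rfun_pos (t := t) hD
      field_simp
      linear_combination (-(t*e*(a-b)))*he
    have h := rot_conj hij lam (trig1 hD he) hcond
    rw [h]

/-- For `F(B) = f(eigenvalues of B)` (encoded by orthogonal invariance of `F` and
`F(diag d) = f(d)`), at a diagonal matrix with distinct entries the derivative matrix
`F^{ij}` is diagonal with diagonal entries `fᵢ(λ)`: the directional derivative of `F`
in the direction `Eᵢᵢ` is `fᵢ(λ)` and in each symmetric off-diagonal direction is `0`. -/
theorem stmt17 {n : ℕ} (Γ : Set (Fin n → ℝ)) (hopen : IsOpen Γ)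
    (hΓsym : ∀ σ : Equiv.Perm (Fin n), ∀ x ∈ Γ, (fun i => x (σ i)) ∈ Γ)
    (f : (Fin n → ℝ) → ℝ)
    (hfsym : ∀ σ : Equiv.Perm (Fin n), ∀ x ∈ Γ, f (fun i => x (σ i)) = f x)
    (hfC1 : ∀ x ∈ Γ, DifferentiableAt ℝ f x)
    (F : Matrix (Fin n) (Fin n) ℝ → ℝ)
    (hFf : ∀ d : Fin n → ℝ, d ∈ Γ → F (Matrix.diagonal d) = f d)
    (hFinv : ∀ B Q : Matrix (Fin n) (Fin n) ℝ, Q.transpose * Q = 1 → F (Q.transpose * B * Q) = F B)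
    (lam : Fin n → ℝ) (hlam : lam ∈ Γ)
    (hdist : ∀ i j, i ≠ j → lam i ≠ lam j)
    (φ : (Fin n → ℝ) →L[ℝ] ℝ) (hf' : HasFDerivAt f φ lam) :
    (∀ i : Fin n, HasDerivAt
        (fun t : ℝ => F (Matrix.diagonal lam + t • Matrix.single i i 1))
        (φ (Pi.single i 1)) 0) ∧
    (∀ i j : Fin n, i ≠ j → HasDerivAt
        (fun t : ℝ => F (Matrix.diagonal lam +
          t • (Matrix.single i j 1 + Matrix.single j i 1)))
        0 0) := by
  constructor
  · intro i
    have hψ : HasDerivAt (fun t : ℝ => lam + t • (Pi.single i 1 : Fin n → ℝ))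
        (Pi.single i 1) 0 := by
      have h := ((hasDerivAt_id (0:ℝ)).smul_const (Pi.single i 1 : Fin n → ℝ)).const_add lam
      simpa using h
    have hψ0 : lam + (0:ℝ) • (Pi.single i 1 : Fin n → ℝ) = lam := by simp
    have hf2 : HasFDerivAt f φ (lam + (0:ℝ) • (Pi.single i 1 : Fin n → ℝ)) := by
      rw [hψ0]; exact hf'
    have hcomp : HasDerivAt (fun t : ℝ => f (lam + t • (Pi.single i 1 : Fin n → ℝ)))
        (φ (Pi.single i 1)) 0 := hf2.comp_hasDerivAt 0 hψ
    have hmem : ∀ᶠ t in nhds (0:ℝ), lam + t • (Pi.single i 1 : Fin n → ℝ) ∈ Γ := by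
      have := hψ.continuousAt.preimage_mem_nhds (by rw [hψ0]; exact hopen.mem_nhds hlam)
      exact this
    have heq : (fun t : ℝ => F (Matrix.diagonal lam + t • Matrix.single i i 1))
        =ᶠ[nhds (0:ℝ)] fun t : ℝ => f (lam + t • (Pi.single i 1 : Fin n → ℝ)) := by
      filter_upwards [hmem] with t ht
      have hmat : Matrix.diagonal lam + t • Matrix.single i i 1
          = Matrix.diagonal (lam + t • (Pi.single i 1 : Fin n → ℝ)) := by
        ext a b
        by_cases h1 : a = b <;> by_cases h2 : i = a <;>
          simp_all [Matrix.diagonal_apply, Matrix.single, Pi.single_apply, eq_comm]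
      rw [hmat, hFf _ ht]
    exact hcomp.congr_of_eventuallyEq heq
  · intro i j hij
    obtain ⟨μ, hμ0, hμ', hQ⟩ := offdiag_aux i j hij lam (hdist i j hij)
    have hf2 : HasFDerivAt f φ (μ 0) := by rw [hμ0]; exact hf'
    have hcomp : HasDerivAt (fun t => f (μ t)) 0 0 := by
      have h := hf2.comp_hasDerivAt 0 hμ'
      simp at h; exact h
    have hmem : ∀ᶠ t in nhds (0:ℝ), μ t ∈ Γ := by
      exact hμ'.continuousAt.preimage_mem_nhds (by rw [hμ0]; exact hopen.mem_nhds hlam)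
    have heq : (fun t : ℝ => F (Matrix.diagonal lam +
          t • (Matrix.single i j 1 + Matrix.single j i 1)))
        =ᶠ[nhds (0:ℝ)] fun t => f (μ t) := by
      filter_upwards [hmem] with t ht
      obtain ⟨Q, hQorth, hQconj⟩ := hQ t
      calc F (Matrix.diagonal lam +
            t • (Matrix.single i j 1 + Matrix.single j i 1))
          = F (Qᵀ * (Matrix.diagonal lam +
            t • (Matrix.single i j 1 + Matrix.single j i 1)) * Q) :=
            (hFinv _ Q hQorth).symm
        _ = F (Matrix.diagonal (μ t)) := by rw [hQconj]
        _ = f (μ t) := hFf _ ht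
    exact hcomp.congr_of_eventuallyEq heq
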